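/- (Unconditional numerical energy conservation.) Assume ω_j ≠ 0 for all j and ω = min_j ω_j ≥ (1/2)c₀²‖A‖ + 1. Then there is a constant C depending only on c₀, c₁, ‖A‖, ‖Ωq_0‖ and ‖q̇_0‖ (but not on n, h, d or the numerical trajectory) such that |H(q_n, q̇_n) − H(q_0, q̇_0)| ≤ C min(h, ω^{-1}) + C h² for all n ∈ ℕ. -/

import Mathlib

open scoped BigOperators

/-- `sinc ξ = sin ξ / ξ` with `sinc 0 = 1`. -/
noncomputable def sinc (x : ℝ) : ℝ := if x = 0 then 1 else Real.sin x / x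

/-- Entrywise (diagonal-matrix) action of a real function family on `ℂ^d`. -/
noncomputable def dOp {d : ℕ} (f : Fin d → ℝ) (q : EuclideanSpace ℂ (Fin d)) :
    EuclideanSpace ℂ (Fin d) := WithLp.toLp 2 (fun i => (f i : ℂ) * q i)

/-- Position update of the trigonometric integrator for the linear force `g(q) = -A q`:
`q_{n+1} = cos(hΩ) q_n + h sinc(hΩ) q̇_n + ½h² sinc(hΩ) Ψ₁ g(Φ q_n)`. -/
noncomputable def trigStepQ {d : ℕ} (h : ℝ) (ω : Fin d → ℝ) (ψ₁ φ : ℝ → ℝ)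
    (A : EuclideanSpace ℂ (Fin d) →L[ℂ] EuclideanSpace ℂ (Fin d))
    (q p : EuclideanSpace ℂ (Fin d)) : EuclideanSpace ℂ (Fin d) :=
  dOp (fun i => Real.cos (h * ω i)) q + h • dOp (fun i => sinc (h * ω i)) p
    + (h ^ 2 / 2) • dOp (fun i => sinc (h * ω i))
        (dOp (fun i => ψ₁ (h * ω i)) (-(A (dOp (fun i => φ (h * ω i)) q))))

/-- Velocity update of the trigonometric integrator for the linear force `g(q) = -A q`:
`q̇_{n+1} = -Ω sin(hΩ) q_n + cos(hΩ) q̇_n + ½h (cos(hΩ) Ψ₁ g(Φ q_n) + Ψ₁ g(Φ q_{n+1}))`. -/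
noncomputable def trigStepP {d : ℕ} (h : ℝ) (ω : Fin d → ℝ) (ψ₁ φ : ℝ → ℝ)
    (A : EuclideanSpace ℂ (Fin d) →L[ℂ] EuclideanSpace ℂ (Fin d))
    (q p : EuclideanSpace ℂ (Fin d)) : EuclideanSpace ℂ (Fin d) :=
  -(dOp (fun i => ω i * Real.sin (h * ω i)) q) + dOp (fun i => Real.cos (h * ω i)) p
    + (h / 2) • (dOp (fun i => Real.cos (h * ω i))
          (dOp (fun i => ψ₁ (h * ω i)) (-(A (dOp (fun i => φ (h * ω i)) q))))
        + dOp (fun i => ψ₁ (h * ω i))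
            (-(A (dOp (fun i => φ (h * ω i)) (trigStepQ h ω ψ₁ φ A q p)))))

/-- The modified energy
`ℋ(q,q̇) = ½‖Ωq‖² + ½‖q̇‖² + ½ Re((cos(hΩ)Φq)* A Φq) − ⅛h²‖Ψ₁ A Φq‖²`. -/
noncomputable def modEnergy {d : ℕ} (h : ℝ) (ω : Fin d → ℝ) (ψ₁ φ : ℝ → ℝ)
    (A : EuclideanSpace ℂ (Fin d) →L[ℂ] EuclideanSpace ℂ (Fin d))
    (q p : EuclideanSpace ℂ (Fin d)) : ℝ :=
  (1 / 2) * ‖dOp ω q‖ ^ 2 + (1 / 2) * ‖p‖ ^ 2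
    + (1 / 2) * (inner (𝕜 := ℂ) (dOp (fun i => Real.cos (h * ω i)) (dOp (fun i => φ (h * ω i)) q))
        (A (dOp (fun i => φ (h * ω i)) q))).re
    - (1 / 8) * h ^ 2 * ‖dOp (fun i => ψ₁ (h * ω i)) (A (dOp (fun i => φ (h * ω i)) q))‖ ^ 2

/-- The total energy `H(q,q̇) = ½‖Ωq‖² + ½‖q̇‖² + ½ q* A q` of `q̈ = -Ω²q - Aq`. -/
noncomputable def energy {d : ℕ} (ω : Fin d → ℝ)
    (A : EuclideanSpace ℂ (Fin d) →L[ℂ] EuclideanSpace ℂ (Fin d))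
    (q p : EuclideanSpace ℂ (Fin d)) : ℝ :=
  (1 / 2) * ‖dOp ω q‖ ^ 2 + (1 / 2) * ‖p‖ ^ 2 + (1 / 2) * (inner (𝕜 := ℂ) q (A q)).re

set_option maxHeartbeats 1000000

section auxlib

variable {d : ℕ}

local notation "V" => EuclideanSpace ℂ (Fin d)
local notation "⟪" x ", " y "⟫" => @inner ℂ _ _ x y

lemma dOp_apply (f : Fin d → ℝ) (x : V) (i : Fin d) : dOp f x i = (f i : ℂ) * x i := rfl

lemma dOp_add (f : Fin d → ℝ) (x y : V) : dOp f (x + y) = dOp f x + dOp f y := by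
  ext i; simp [dOp]; ring

lemma dOp_neg (f : Fin d → ℝ) (x : V) : dOp f (-x) = -dOp f x := by
  ext i; simp [dOp]

lemma dOp_sub (f : Fin d → ℝ) (x y : V) : dOp f (x - y) = dOp f x - dOp f y := by
  ext i; simp [dOp]; ring

lemma real_smul_eqc (r : ℝ) (x : V) : r • x = (r : ℂ) • x := by
  ext i; simp [Complex.real_smul]

lemma dOp_csmul (f : Fin d → ℝ) (a : ℂ) (x : V) : dOp f (a • x) = a • dOp f x := by
  ext i; simp [dOp]; ring

lemma dOp_rsmul (f : Fin d → ℝ) (a : ℝ) (x : V) : dOp f (a • x) = a • dOp f x := by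
  rw [real_smul_eqc, real_smul_eqc a (dOp f x), dOp_csmul]

lemma dOp_dOp (f g : Fin d → ℝ) (x : V) :
    dOp f (dOp g x) = dOp (fun i => f i * g i) x := by
  ext i; simp [dOp]; ring

lemma dOp_add_fun (f g : Fin d → ℝ) (x : V) :
    dOp f x + dOp g x = dOp (fun i => f i + g i) x := by
  ext i; simp [dOp]; ring

lemma dOp_one (x : V) : dOp (fun _ => (1 : ℝ)) x = x := by
  ext i; simp [dOp]

lemma rsmul_dOp (f : Fin d → ℝ) (a : ℝ) (x : V) :
    a • dOp f x = dOp (fun i => a * f i) x := by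
  rw [real_smul_eqc]; ext i; simp [dOp]; ring

lemma inner_dOp_left (f : Fin d → ℝ) (x y : V) : ⟪dOp f x, y⟫ = ⟪x, dOp f y⟫ := by
  simp only [dOp, PiLp.inner_apply, RCLike.inner_apply, map_mul, Complex.conj_ofReal]
  congr 1; ext i; ring

lemma re_inner_symm (x y : V) : (⟪x, y⟫).re = (⟪y, x⟫).re := by
  rw [← inner_conj_symm, Complex.conj_re]

lemma inner_rsmul_left (r : ℝ) (x y : V) : ⟪r • x, y⟫ = (r : ℂ) * ⟪x, y⟫ := by
  rw [real_smul_eqc, inner_smul_left, Complex.conj_ofReal]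

lemma inner_rsmul_right (r : ℝ) (x y : V) : ⟪x, r • y⟫ = (r : ℂ) * ⟪x, y⟫ := by
  rw [real_smul_eqc, inner_smul_right]

lemma re_coe_mul (r : ℝ) (z : ℂ) : ((r : ℂ) * z).re = r * z.re := by
  simp [Complex.mul_re]

lemma norm_sq_eq (x : V) : ‖x‖ ^ 2 = ∑ i, ‖x i‖ ^ 2 := by
  rw [EuclideanSpace.norm_eq, Real.sq_sqrt]; positivity

lemma norm_dOp_sq (f : Fin d → ℝ) (x : V) :
    ‖dOp f x‖ ^ 2 = ∑ i, (f i) ^ 2 * ‖x i‖ ^ 2 := by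
  rw [norm_sq_eq]
  refine Finset.sum_congr rfl fun i _ => ?_
  rw [dOp_apply, norm_mul, mul_pow, Complex.norm_real, Real.norm_eq_abs, sq_abs]

lemma norm_sub_sq' (x y : V) : ‖x - y‖ ^ 2 = ‖x‖ ^ 2 - 2 * (⟪x, y⟫).re + ‖y‖ ^ 2 := by
  have := @norm_sub_sq ℂ _ _ _ _ x y
  simpa using this

lemma norm_add_sq' (x y : V) : ‖x + y‖ ^ 2 = ‖x‖ ^ 2 + 2 * (⟪x, y⟫).re + ‖y‖ ^ 2 := by
  have := @norm_add_sq ℂ _ _ _ _ x y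
  simpa using this

lemma re_inner_self (x : V) : (⟪x, x⟫).re = ‖x‖ ^ 2 := by
  rw [@inner_self_eq_norm_sq_to_K ℂ]; norm_cast

/-- comparison of weighted norms -/
lemma norm_dOp_le_of (f g : Fin d → ℝ) (C : ℝ) (hC : 0 ≤ C)
    (hfg : ∀ i, |f i| ≤ C * |g i|) (x : V) : ‖dOp f x‖ ≤ C * ‖dOp g x‖ := by
  have h1 : ‖dOp f x‖ ^ 2 ≤ (C * ‖dOp g x‖) ^ 2 := by
    rw [norm_dOp_sq, mul_pow, norm_dOp_sq, Finset.mul_sum]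
    refine Finset.sum_le_sum fun i _ => ?_
    have h2 := hfg i
    have h3 : (0:ℝ) ≤ ‖x i‖ ^ 2 := by positivity
    have h4 : f i ^ 2 ≤ C ^ 2 * g i ^ 2 := by
      nlinarith [mul_self_le_mul_self (abs_nonneg (f i)) h2, abs_mul_abs_self (f i),
        abs_mul_abs_self (g i)]
    nlinarith [mul_le_mul_of_nonneg_right h4 h3]
  nlinarith [norm_nonneg (dOp f x), mul_nonneg hC (norm_nonneg (dOp g x))]

lemma norm_dOp_le_const (f : Fin d → ℝ) (C : ℝ) (hC : 0 ≤ C)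
    (hf : ∀ i, |f i| ≤ C) (x : V) : ‖dOp f x‖ ≤ C * ‖x‖ := by
  have := norm_dOp_le_of f (fun _ => 1) C hC (by simpa using hf) x
  simpa [dOp_one] using this

lemma norm_le_dOp (g : Fin d → ℝ) (c : ℝ) (hc : 0 ≤ c)
    (hg : ∀ i, c ≤ |g i|) (x : V) : c * ‖x‖ ≤ ‖dOp g x‖ := by
  have h1 : (c * ‖x‖) ^ 2 ≤ ‖dOp g x‖ ^ 2 := by
    rw [mul_pow, norm_dOp_sq, norm_sq_eq, Finset.mul_sum]
    refine Finset.sum_le_sum fun i _ => ?_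
    have h2 := hg i
    have h3 : (0:ℝ) ≤ ‖x i‖ ^ 2 := by positivity
    nlinarith [mul_self_le_mul_self hc h2, abs_mul_abs_self (g i), h3]
  nlinarith [norm_nonneg (dOp g x), mul_nonneg hc (norm_nonneg x)]

lemma quad_lower (K : ℝ) (g : Fin d → ℝ) (hK : ∀ i, K ≤ (3/8) * (g i) ^ 2) (x : V) :
    K * ‖x‖ ^ 2 ≤ (3/8) * ‖dOp g x‖ ^ 2 := by
  rw [norm_sq_eq, norm_dOp_sq, Finset.mul_sum, Finset.mul_sum]
  refine Finset.sum_le_sum fun i _ => ?_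
  have h3 : (0:ℝ) ≤ ‖x i‖ ^ 2 := by positivity
  have := hK i
  nlinarith

lemma norm_re_inner_le (x y : V) : |(⟪x, y⟫).re| ≤ ‖x‖ * ‖y‖ := by
  refine le_trans (Complex.abs_re_le_norm _) ?_
  exact norm_inner_le_norm x y

end auxlib

section conserve

variable {d : ℕ}
local notation "V" => EuclideanSpace ℂ (Fin d)
local notation "⟪" x ", " y "⟫" => @inner ℂ _ _ x y

lemma dOp_congr (f g : Fin d → ℝ) (x : V) (hfg : ∀ i, f i = g i) : dOp f x = dOp g x := by
  ext i; rw [dOp_apply, dOp_apply, hfg i]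

lemma abstract_conserve (h : ℝ) (ω c s σ : Fin d → ℝ)
    (hcs : ∀ i, c i ^ 2 + s i ^ 2 = 1)
    (hs : ∀ i, h * (ω i * σ i) = s i)
    (B : V → V)
    (hBadd : ∀ x y, B (x + y) = B x + B y)
    (hBsmul : ∀ (a : ℝ) (x : V), B (a • x) = a • B x)
    (hBsym : ∀ x y : V, ⟪B x, y⟫ = ⟪x, B y⟫)
    (q p pt Q P : V)
    (hpt : pt = p - (h/2) • dOp σ (B q))
    (hQ : Q = dOp c q + h • dOp σ pt)
    (hP : P = -(dOp (fun i => ω i * s i) q) + dOp c pt - (h/2) • dOp σ (B Q)) :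
    (1/2)*‖dOp ω Q‖^2 + (1/2)*‖P‖^2 + (1/2)*(⟪dOp c Q, B Q⟫).re
      - (1/8)*h^2*‖dOp σ (B Q)‖^2
    = (1/2)*‖dOp ω q‖^2 + (1/2)*‖p‖^2 + (1/2)*(⟪dOp c q, B q⟫).re
      - (1/8)*h^2*‖dOp σ (B q)‖^2 := by
  set u := dOp ω q with hu
  set a := dOp c q with ha
  set r := dOp σ (B q) with hr
  set r' := dOp σ (B Q) with hr'
  set b := dOp σ pt with hb
  set P' := -(dOp s u) + dOp c pt with hP'
  clear_value u a r r' b P'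
  -- basic reshapes
  have hsu : dOp (fun i => ω i * s i) q = dOp s u := by
    rw [hu, dOp_dOp]; exact dOp_congr _ _ _ fun i => by ring
  have f1 : dOp ω Q = dOp c u + dOp s pt := by
    rw [hQ, ha, hb, hu]
    rw [dOp_add, dOp_dOp, dOp_rsmul, dOp_dOp, rsmul_dOp]
    have g1 : dOp c (dOp ω q) = dOp (fun i => ω i * c i) q := by
      rw [dOp_dOp]; exact dOp_congr _ _ _ fun i => by ring
    have g2 : dOp s pt = dOp (fun i => h * (ω i * σ i)) pt :=
      dOp_congr _ _ _ fun i => (hs i).symm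
    rw [g1, g2]
  have f2 : P = P' - (h/2) • r' := by
    rw [hP, hsu, hP']
  have hnr' : ‖(h/2) • r'‖^2 = h^2/4 * ‖r'‖^2 := by
    rw [norm_smul, mul_pow, Real.norm_eq_abs, sq_abs]; ring
  have hnr : ‖(h/2) • r‖^2 = h^2/4 * ‖r‖^2 := by
    rw [norm_smul, mul_pow, Real.norm_eq_abs, sq_abs]; ring
  -- rotation invariance
  have pyth : ∀ x : V, ‖dOp c x‖^2 + ‖dOp s x‖^2 = ‖x‖^2 := by
    intro x
    rw [norm_dOp_sq, norm_dOp_sq, norm_sq_eq, ← Finset.sum_add_distrib]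
    refine Finset.sum_congr rfl fun i _ => ?_
    linear_combination ‖x i‖^2 * hcs i
  have cross : (⟪dOp c pt, dOp s u⟫).re = (⟪dOp c u, dOp s pt⟫).re := by
    rw [re_inner_symm]
    have e1 : ⟪dOp s u, dOp c pt⟫ = ⟪dOp c u, dOp s pt⟫ := by
      rw [inner_dOp_left, inner_dOp_left, dOp_dOp, dOp_dOp]
      exact congrArg (fun z : EuclideanSpace ℂ (Fin d) => (inner ℂ u z : ℂ))
        (dOp_congr _ _ _ fun i => by ring)
    rw [e1]
  have f3 : ‖dOp ω Q‖^2 + ‖P'‖^2 = ‖u‖^2 + ‖pt‖^2 := by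
    rw [f1]
    have e : P' = dOp c pt - dOp s u := by rw [hP']; abel
    rw [e, norm_add_sq', norm_sub_sq']
    have p1 := pyth u
    have p2 := pyth pt
    linarith [cross]
  have f4 : ‖P‖^2 = ‖P'‖^2 - h * (⟪P', r'⟫).re + h^2/4 * ‖r'‖^2 := by
    rw [f2, norm_sub_sq', hnr', inner_rsmul_right, re_coe_mul]; ring
  have hp : p = pt + (h/2) • r := by rw [hpt]; abel
  have f5 : ‖p‖^2 = ‖pt‖^2 + h * (⟪pt, r⟫).re + h^2/4 * ‖r‖^2 := by
    rw [hp, norm_add_sq', hnr, inner_rsmul_right, re_coe_mul]; ring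
  -- the key cross identities
  have key1 : ∀ z : V, ⟪dOp c b, z⟫ = ⟪dOp c pt, dOp σ z⟫ := by
    intro z
    rw [hb, dOp_dOp,
      dOp_congr (fun i => c i * σ i) (fun i => σ i * c i) pt (fun i => by ring),
      ← dOp_dOp, inner_dOp_left]
  have key2 : ∀ z : V, (⟪dOp c a, z⟫).re + h * (⟪dOp s u, dOp σ z⟫).re = (⟪q, z⟫).re := by
    intro z
    have hv : dOp c a + h • dOp σ (dOp s u) = q := by
      rw [ha, hu, dOp_dOp, dOp_dOp, dOp_dOp, rsmul_dOp, dOp_add_fun]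
      refine Eq.trans (dOp_congr _ _ q fun i => ?_) (dOp_one q)
      linear_combination hcs i + s i * hs i
    have step : (⟪h • dOp σ (dOp s u), z⟫).re = h * (⟪dOp s u, dOp σ z⟫).re := by
      rw [inner_rsmul_left, re_coe_mul, inner_dOp_left σ (dOp s u) z]
    calc (⟪dOp c a, z⟫).re + h * (⟪dOp s u, dOp σ z⟫).re
        = (⟪dOp c a, z⟫).re + (⟪h • dOp σ (dOp s u), z⟫).re := by rw [step]
      _ = (⟪dOp c a + h • dOp σ (dOp s u), z⟫).re := by rw [inner_add_left, Complex.add_re]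
      _ = (⟪q, z⟫).re := by rw [hv]
  have E1 := congrArg Complex.re (key1 (B a))
  have E2 := congrArg Complex.re (key1 (B b))
  have E3 : (⟪dOp c a, B a⟫).re + h * (⟪dOp s u, dOp σ (B a)⟫).re = (⟪a, B q⟫).re := by
    rw [key2 (B a), ← hBsym, re_inner_symm]
  have E4 : (⟪dOp c a, B b⟫).re + h * (⟪dOp s u, dOp σ (B b)⟫).re = (⟪pt, r⟫).re := by
    rw [key2 (B b), ← hBsym, re_inner_symm, hb, inner_dOp_left, ← hr]
  have f6 : (⟪dOp c Q, B Q⟫).re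
      = (⟪a, B q⟫).re + h * (⟪pt, r⟫).re + h * (⟪P', r'⟫).re := by
    have hQab : Q = a + h • b := hQ
    have expBQ : B Q = B a + h • B b := by rw [hQab, hBadd, hBsmul]
    have expcQ : dOp c Q = dOp c a + h • dOp c b := by rw [hQab, dOp_add, dOp_rsmul]
    have expr' : r' = dOp σ (B a) + h • dOp σ (B b) := by
      rw [hr', expBQ, dOp_add, dOp_rsmul]
    rw [expcQ, expBQ, hP', expr']
    simp only [inner_add_left, inner_add_right, inner_neg_left, inner_rsmul_left,
      inner_rsmul_right, Complex.add_re, Complex.neg_re, re_coe_mul]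
    linear_combination E3 + h * E4 + h * E1 + h^2 * E2
  linear_combination (1/2) * f3 + (1/2) * f4 - (1/2) * f5 + (1/2) * f6

end conserve

section instantiate

variable {d : ℕ}
local notation "V" => EuclideanSpace ℂ (Fin d)
local notation "⟪" x ", " y "⟫" => @inner ℂ _ _ x y

lemma mul_sinc (x : ℝ) : x * sinc x = Real.sin x := by
  unfold sinc
  by_cases hx : x = 0
  · simp [hx]
  · rw [if_neg hx]; field_simp [hx]

lemma abs_sinc_le_one (x : ℝ) : |sinc x| ≤ 1 := by
  unfold sinc
  split_ifs with hx
  · simp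
  · rw [abs_div, div_le_one (abs_pos.2 hx)]
    exact Real.abs_sin_le_abs

lemma modEnergy_step (h : ℝ) (ω : Fin d → ℝ) (ψ₁ φ : ℝ → ℝ)
    (hψ : ∀ ξ, ψ₁ ξ = sinc ξ * φ ξ)
    (A : V →L[ℂ] V) (hA : IsSelfAdjoint A) (q p : V) :
    modEnergy h ω ψ₁ φ A (trigStepQ h ω ψ₁ φ A q p) (trigStepP h ω ψ₁ φ A q p)
      = modEnergy h ω ψ₁ φ A q p := by
  have hcs : ∀ i, (Real.cos (h * ω i)) ^ 2 + (Real.sin (h * ω i)) ^ 2 = 1 := fun i => by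
    linear_combination Real.sin_sq_add_cos_sq (h * ω i)
  have hsh : ∀ i, h * (ω i * sinc (h * ω i)) = Real.sin (h * ω i) := fun i => by
    rw [show h * (ω i * sinc (h * ω i)) = (h * ω i) * sinc (h * ω i) by ring, mul_sinc]
  -- the sandwiched operator
  have hBadd : ∀ x y : V, (fun v : V => dOp (fun i => φ (h * ω i)) (A (dOp (fun i => φ (h * ω i)) v))) (x + y)
      = (fun v : V => dOp (fun i => φ (h * ω i)) (A (dOp (fun i => φ (h * ω i)) v))) x
        + (fun v : V => dOp (fun i => φ (h * ω i)) (A (dOp (fun i => φ (h * ω i)) v))) y := by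
    intro x y
    simp only [dOp_add, map_add]
  have hBsmul : ∀ (a : ℝ) (x : V), (fun v : V => dOp (fun i => φ (h * ω i)) (A (dOp (fun i => φ (h * ω i)) v))) (a • x)
      = a • (fun v : V => dOp (fun i => φ (h * ω i)) (A (dOp (fun i => φ (h * ω i)) v))) x := by
    intro a x
    simp only []
    rw [dOp_rsmul, real_smul_eqc, map_smul, dOp_csmul, ← real_smul_eqc]
  have hBsym : ∀ x y : V, ⟪(fun v : V => dOp (fun i => φ (h * ω i)) (A (dOp (fun i => φ (h * ω i)) v))) x, y⟫
      = ⟪x, (fun v : V => dOp (fun i => φ (h * ω i)) (A (dOp (fun i => φ (h * ω i)) v))) y⟫ := by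
    intro x y
    simp only []
    have hA' : ∀ x y : V, ⟪A x, y⟫ = ⟪x, A y⟫ := fun x y => hA.isSymmetric x y
    rw [inner_dOp_left, hA', inner_dOp_left]
  -- ψ₁-filter decomposition
  have hpsi : ∀ x : V, dOp (fun i => ψ₁ (h * ω i)) x
      = dOp (fun i => sinc (h * ω i)) (dOp (fun i => φ (h * ω i)) x) := by
    intro x
    rw [dOp_dOp]
    exact dOp_congr _ _ _ fun i => by rw [hψ (h * ω i)]
  -- intermediate momentum
  obtain ⟨pt, hpt⟩ : ∃ pt : V, pt = p - (h/2) • dOp (fun i => sinc (h * ω i))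
      (dOp (fun i => φ (h * ω i)) (A (dOp (fun i => φ (h * ω i)) q))) := ⟨_, rfl⟩
  have hQ : trigStepQ h ω ψ₁ φ A q p
      = dOp (fun i => Real.cos (h * ω i)) q + h • dOp (fun i => sinc (h * ω i)) pt := by
    rw [hpt]
    unfold trigStepQ
    rw [hpsi (-(A (dOp (fun i => φ (h * ω i)) q)))]
    simp only [dOp_neg, smul_neg, dOp_sub, dOp_rsmul, smul_sub, smul_smul]
    module
  have hP : trigStepP h ω ψ₁ φ A q p
      = -(dOp (fun i => ω i * Real.sin (h * ω i)) q)
        + dOp (fun i => Real.cos (h * ω i)) pt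
        - (h/2) • dOp (fun i => sinc (h * ω i))
            (dOp (fun i => φ (h * ω i)) (A (dOp (fun i => φ (h * ω i))
              (trigStepQ h ω ψ₁ φ A q p)))) := by
    rw [hpt]
    unfold trigStepP
    rw [hpsi (-(A (dOp (fun i => φ (h * ω i)) q))),
        hpsi (-(A (dOp (fun i => φ (h * ω i)) (trigStepQ h ω ψ₁ φ A q p))))]
    simp only [dOp_neg, smul_neg, dOp_sub, dOp_rsmul, smul_sub, smul_add, smul_smul]
    module
  have main := abstract_conserve h ω (fun i => Real.cos (h * ω i))
      (fun i => Real.sin (h * ω i)) (fun i => sinc (h * ω i)) hcs hsh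
      (fun v : V => dOp (fun i => φ (h * ω i)) (A (dOp (fun i => φ (h * ω i)) v)))
      hBadd hBsmul hBsym q p pt (trigStepQ h ω ψ₁ φ A q p) (trigStepP h ω ψ₁ φ A q p)
      hpt hQ hP
  have h3 : ∀ x : V, (⟪dOp (fun i => Real.cos (h * ω i)) (dOp (fun i => φ (h * ω i)) x),
      A (dOp (fun i => φ (h * ω i)) x)⟫)
      = ⟪dOp (fun i => Real.cos (h * ω i)) x,
          dOp (fun i => φ (h * ω i)) (A (dOp (fun i => φ (h * ω i)) x))⟫ := by
    intro x
    rw [dOp_dOp, dOp_congr _ (fun i => φ (h * ω i) * Real.cos (h * ω i)) x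
        (fun i => by ring), ← dOp_dOp, inner_dOp_left]
  simp only [modEnergy]
  rw [h3 (trigStepQ h ω ψ₁ φ A q p), h3 q, hpsi (A (dOp (fun i => φ (h * ω i))
        (trigStepQ h ω ψ₁ φ A q p))), hpsi (A (dOp (fun i => φ (h * ω i)) q))]
  exact main


end instantiate

section estimates

variable {d : ℕ}
local notation "V" => EuclideanSpace ℂ (Fin d)
local notation "⟪" x ", " y "⟫" => @inner ℂ _ _ x y

lemma one_le_inv_mul (ωm ωi : ℝ) (hωm : 1 ≤ ωm) (hωi : ωm ≤ ωi) : 1 ≤ ωm⁻¹ * ωi := by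
  have hpos : (0:ℝ) < ωm := by linarith
  have e : ωm⁻¹ * ωm = 1 := inv_mul_cancel₀ (ne_of_gt hpos)
  nlinarith [mul_le_mul_of_nonneg_left hωi (le_of_lt (inv_pos.2 hpos))]

lemma cos_pointwise (h ωi ωm : ℝ) (h0 : 0 < h) (hωm : 1 ≤ ωm) (hωi : ωm ≤ ωi) :
    1 - Real.cos (h * ωi) ≤ 2 * min h ωm⁻¹ * ωi := by
  have hξ : 0 < h * ωi := by nlinarith
  rcases le_total h ωm⁻¹ with hm | hm
  · rw [min_eq_left hm]
    rcases le_total (h * ωi) 2 with h2 | h2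
    · have := Real.one_sub_sq_div_two_le_cos (x := h * ωi)
      nlinarith
    · have := Real.neg_one_le_cos (h * ωi)
      nlinarith
  · rw [min_eq_right hm]
    have h1 := one_le_inv_mul ωm ωi hωm hωi
    have := Real.neg_one_le_cos (h * ωi)
    nlinarith

lemma phi_pointwise (h ωi ωm c₀ c₁ φv : ℝ) (h0 : 0 < h) (hωm : 1 ≤ ωm) (hωi : ωm ≤ ωi)
    (hb : |φv| ≤ c₀) (h1 : |φv - 1| ≤ c₁ * (h * ωi)) :
    |φv - 1| ≤ (1 + c₀ + c₁) * min h ωm⁻¹ * ωi := by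
  have hξ : 0 < h * ωi := by nlinarith
  have hc₀ : 0 ≤ c₀ := le_trans (abs_nonneg _) hb
  have hc₁ : 0 ≤ c₁ := by nlinarith [abs_nonneg (φv - 1)]
  rcases le_total h ωm⁻¹ with hm | hm
  · rw [min_eq_left hm]
    have : c₁ * (h * ωi) ≤ (1 + c₀ + c₁) * h * ωi := by nlinarith
    linarith
  · rw [min_eq_right hm]
    have h1' := one_le_inv_mul ωm ωi hωm hωi
    have h2 : |φv - 1| ≤ c₀ + 1 := by
      have := abs_add_le φv (-1)
      simp only [abs_neg, abs_one] at this
      calc |φv - 1| = |φv + (-1)| := by ring_nf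
        _ ≤ |φv| + 1 := this
        _ ≤ c₀ + 1 := by linarith
    have hstep : (c₀ + 1) * 1 ≤ (c₀ + 1) * (ωm⁻¹ * ωi) := by nlinarith
    nlinarith

lemma main_pointwise (h ωi ωm c₀ c₁ φv : ℝ) (h0 : 0 < h) (hωm : 1 ≤ ωm) (hωi : ωm ≤ ωi)
    (hb : |φv| ≤ c₀) (h1 : |φv - 1| ≤ c₁ * (h * ωi)) :
    |1 - Real.cos (h * ωi) * φv| ≤ (3 + c₀ + c₁) * min h ωm⁻¹ * ωi := by
  have e : 1 - Real.cos (h * ωi) * φv = (1 - Real.cos (h * ωi)) + Real.cos (h * ωi) * (1 - φv) := by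
    ring
  have hcos1 : |Real.cos (h * ωi)| ≤ 1 := Real.abs_cos_le_one _
  have t1 : |1 - Real.cos (h * ωi)| = 1 - Real.cos (h * ωi) := by
    rw [abs_of_nonneg]; linarith [Real.cos_le_one (h * ωi)]
  have t2 : |Real.cos (h * ωi) * (1 - φv)| ≤ |φv - 1| := by
    rw [abs_mul]
    have : |1 - φv| = |φv - 1| := abs_sub_comm _ _
    nlinarith [abs_nonneg (φv - 1)]
  calc |1 - Real.cos (h * ωi) * φv|
      ≤ |1 - Real.cos (h * ωi)| + |Real.cos (h * ωi) * (1 - φv)| := by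
        rw [e]; exact abs_add_le _ _
    _ ≤ (1 - Real.cos (h * ωi)) + |φv - 1| := by rw [t1]; linarith
    _ ≤ 2 * min h ωm⁻¹ * ωi + (1 + c₀ + c₁) * min h ωm⁻¹ * ωi := by
        have := cos_pointwise h ωi ωm h0 hωm hωi
        have := phi_pointwise h ωi ωm c₀ c₁ φv h0 hωm hωi hb h1
        linarith
    _ = (3 + c₀ + c₁) * min h ωm⁻¹ * ωi := by ring

end estimates

section energybounds

variable {d : ℕ}
local notation "V" => EuclideanSpace ℂ (Fin d)
local notation "⟪" x ", " y "⟫" => @inner ℂ _ _ x y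

lemma re_inner_bound (x y : V) (a b : ℝ) (hx : ‖x‖ ≤ a) (hy : ‖y‖ ≤ b) :
    |(⟪x, y⟫).re| ≤ a * b :=
  le_trans (norm_re_inner_le x y)
    (mul_le_mul hx hy (norm_nonneg _) (le_trans (norm_nonneg x) hx))

lemma modEnergy_close_base (h : ℝ) (h0 : 0 < h) (h1 : h ≤ 1)
    (ω : Fin d → ℝ) (hω0 : ∀ i, 0 ≤ ω i)
    (ψ₁ φ : ℝ → ℝ) (c₀ : ℝ)
    (hψ : ∀ ξ, ψ₁ ξ = sinc ξ * φ ξ)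
    (hφb : ∀ ξ, |φ ξ| ≤ c₀)
    (A : V →L[ℂ] V)
    (ωm : ℝ) (hωm1 : 1 ≤ ωm) (hωml : ∀ i, ωm ≤ ω i)
    (hbig : (1/2) * c₀^2 * ‖A‖ + 1 ≤ ωm)
    (q p : V) :
    |modEnergy h ω ψ₁ φ A q p - ((1/2) * ‖dOp ω q‖^2 + (1/2) * ‖p‖^2)|
      ≤ (3/8) * ‖dOp ω q‖^2 := by
  have hωmp : (0:ℝ) < ωm := by linarith
  have hc₀ : 0 ≤ c₀ := le_trans (abs_nonneg _) (hφb 0)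
  have hA0 : (0:ℝ) ≤ ‖A‖ := norm_nonneg _
  have hb : (1/2) * c₀^2 * ‖A‖ ≤ ωm - 1 := by linarith
  have hb0 : (0:ℝ) ≤ (1/2) * c₀^2 * ‖A‖ := by positivity
  set w : V := dOp (fun i => φ (h * ω i)) q with hw
  clear_value w
  -- norm bounds
  have nw : ‖w‖ ≤ c₀ * ‖q‖ := by
    rw [hw]; exact norm_dOp_le_const _ c₀ hc₀ (fun i => hφb _) q
  have nAw : ‖A w‖ ≤ ‖A‖ * (c₀ * ‖q‖) :=
    le_trans (A.le_opNorm w) (mul_le_mul_of_nonneg_left nw hA0)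
  have ncw : ‖dOp (fun i => Real.cos (h * ω i)) w‖ ≤ c₀ * ‖q‖ := by
    refine le_trans (norm_dOp_le_const _ 1 zero_le_one (fun i => Real.abs_cos_le_one _) w) ?_
    rw [one_mul]; exact nw
  have T1 : |(⟪dOp (fun i => Real.cos (h * ω i)) w, A w⟫).re|
      ≤ (c₀ * ‖q‖) * (‖A‖ * (c₀ * ‖q‖)) := re_inner_bound _ _ _ _ ncw nAw
  -- filtered term
  have hpsi_pt : ∀ i, |h * ψ₁ (h * ω i)| ≤ c₀ * ωm⁻¹ := by
    intro i
    have hωi : ωm ≤ ω i := hωml i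
    have hωip : (0:ℝ) < ω i := lt_of_lt_of_le hωmp hωi
    have e1 : h * ψ₁ (h * ω i) * ω i = Real.sin (h * ω i) * φ (h * ω i) := by
      rw [hψ]; linear_combination (φ (h * ω i)) * mul_sinc (h * ω i)
    have e2 : |h * ψ₁ (h * ω i)| * ω i ≤ c₀ := by
      have := abs_mul (h * ψ₁ (h * ω i)) (ω i)
      rw [abs_of_nonneg hωip.le] at this
      rw [← this, e1, abs_mul]
      nlinarith [Real.abs_sin_le_one (h * ω i), abs_nonneg (Real.sin (h * ω i)),
        hφb (h * ω i), abs_nonneg (φ (h * ω i))]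
    have e3 : |h * ψ₁ (h * ω i)| * ωm ≤ c₀ := by
      refine le_trans ?_ e2
      exact mul_le_mul_of_nonneg_left hωi (abs_nonneg _)
    rw [show c₀ * ωm⁻¹ = c₀ / ωm by rw [div_eq_mul_inv], le_div_iff₀ hωmp]
    exact e3
  have T2 : h * ‖dOp (fun i => ψ₁ (h * ω i)) (A w)‖
      ≤ (c₀ * ωm⁻¹) * (‖A‖ * (c₀ * ‖q‖)) := by
    have e1 : dOp (fun i => h * ψ₁ (h * ω i)) (A w)
        = h • dOp (fun i => ψ₁ (h * ω i)) (A w) := (rsmul_dOp _ _ _).symm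
    have e2 : ‖dOp (fun i => h * ψ₁ (h * ω i)) (A w)‖
        = h * ‖dOp (fun i => ψ₁ (h * ω i)) (A w)‖ := by
      rw [e1, norm_smul, Real.norm_eq_abs, abs_of_pos h0]
    rw [← e2]
    refine le_trans (norm_dOp_le_const _ (c₀ * ωm⁻¹) ?_ hpsi_pt (A w)) ?_
    · positivity
    · exact mul_le_mul_of_nonneg_left nAw (by positivity)
  -- quadratic coefficient bound
  have hK : ∀ i, (1/2) * c₀^2 * ‖A‖ + (1/8) * (c₀^2 * ‖A‖ * ωm⁻¹)^2 ≤ (3/8) * (ω i)^2 := by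
    intro i
    have hωi : ωm ≤ ω i := hωml i
    have hinv0 : (0:ℝ) ≤ ωm⁻¹ := by positivity
    have hinv1 : ωm * ωm⁻¹ = 1 := mul_inv_cancel₀ (ne_of_gt hωmp)
    have h3 : ((1/2) * c₀^2 * ‖A‖) * ωm⁻¹ ≤ 1 := by
      have := mul_le_mul_of_nonneg_right hb hinv0
      have h4 : (ωm - 1) * ωm⁻¹ ≤ 1 := by nlinarith
      linarith
    have h5 : (1/8) * (c₀^2 * ‖A‖ * ωm⁻¹)^2 ≤ (1/2) * (ωm - 1) := by
      have e : (1/8) * (c₀^2 * ‖A‖ * ωm⁻¹)^2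
          = (1/2) * (((1/2) * c₀^2 * ‖A‖) * ωm⁻¹)^2 := by ring
      rw [e]
      have h6 : (((1/2) * c₀^2 * ‖A‖) * ωm⁻¹)^2 ≤ ((1/2) * c₀^2 * ‖A‖) * ωm⁻¹ := by
        nlinarith [mul_nonneg hb0 hinv0]
      have h7 : ((1/2) * c₀^2 * ‖A‖) * ωm⁻¹ ≤ (1/2) * c₀^2 * ‖A‖ * 1 := by
        have : ωm⁻¹ ≤ 1 := by
          rw [inv_le_one_iff₀]; right; exact hωm1
        nlinarith
      nlinarith
    nlinarith [sq_nonneg (ω i - 2)]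
  have hquad := quad_lower ((1/2) * c₀^2 * ‖A‖ + (1/8) * (c₀^2 * ‖A‖ * ωm⁻¹)^2) ω hK q
  -- assemble
  have e0 : modEnergy h ω ψ₁ φ A q p - ((1/2) * ‖dOp ω q‖^2 + (1/2) * ‖p‖^2)
      = (1/2) * (⟪dOp (fun i => Real.cos (h * ω i)) w, A w⟫).re
        - (1/8) * (h * ‖dOp (fun i => ψ₁ (h * ω i)) (A w)‖)^2 := by
    simp only [modEnergy, ← hw]; ring
  rw [e0]
  have habs : |(1/2) * (⟪dOp (fun i => Real.cos (h * ω i)) w, A w⟫).re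
      - (1/8) * (h * ‖dOp (fun i => ψ₁ (h * ω i)) (A w)‖)^2|
      ≤ (1/2) * |(⟪dOp (fun i => Real.cos (h * ω i)) w, A w⟫).re|
        + (1/8) * (h * ‖dOp (fun i => ψ₁ (h * ω i)) (A w)‖)^2 := by
    rw [abs_le]; constructor <;>
      [nlinarith [abs_nonneg ((⟪dOp (fun i => Real.cos (h * ω i)) w, A w⟫).re),
        neg_abs_le ((⟪dOp (fun i => Real.cos (h * ω i)) w, A w⟫).re)];
       nlinarith [le_abs_self ((⟪dOp (fun i => Real.cos (h * ω i)) w, A w⟫).re),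
        sq_nonneg (h * ‖dOp (fun i => ψ₁ (h * ω i)) (A w)‖)]]
  refine le_trans habs ?_
  have T2sq : (h * ‖dOp (fun i => ψ₁ (h * ω i)) (A w)‖)^2
      ≤ ((c₀ * ωm⁻¹) * (‖A‖ * (c₀ * ‖q‖)))^2 := by
    have hnn : 0 ≤ h * ‖dOp (fun i => ψ₁ (h * ω i)) (A w)‖ := by positivity
    nlinarith [T2]
  have final : (1/2) * ((c₀ * ‖q‖) * (‖A‖ * (c₀ * ‖q‖)))
      + (1/8) * ((c₀ * ωm⁻¹) * (‖A‖ * (c₀ * ‖q‖)))^2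
      = ((1/2) * c₀^2 * ‖A‖ + (1/8) * (c₀^2 * ‖A‖ * ωm⁻¹)^2) * ‖q‖^2 := by ring
  nlinarith [T1, T2sq, hquad]

end energybounds

section closeness

variable {d : ℕ}
local notation "V" => EuclideanSpace ℂ (Fin d)
local notation "⟪" x ", " y "⟫" => @inner ℂ _ _ x y

lemma energy_modEnergy_close (h : ℝ) (h0 : 0 < h) (h1 : h ≤ 1)
    (ω : Fin d → ℝ) (hω0 : ∀ i, 0 ≤ ω i)
    (ψ₁ φ : ℝ → ℝ) (c₀ c₁ : ℝ)
    (hψ : ∀ ξ, ψ₁ ξ = sinc ξ * φ ξ)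
    (hψb : ∀ ξ, |ψ₁ ξ| ≤ c₀)
    (hφb : ∀ ξ, |φ ξ| ≤ c₀)
    (hφ1 : ∀ ξ, |φ ξ - 1| ≤ c₁ * |ξ|)
    (hc0 : 1 ≤ c₀) (hc1 : 0 ≤ c₁)
    (A : V →L[ℂ] V)
    (ωm : ℝ) (hωm1 : 1 ≤ ωm) (hωml : ∀ i, ωm ≤ ω i)
    (hbig : (1/2) * c₀^2 * ‖A‖ + 1 ≤ ωm)
    (q p : V) :
    |energy ω A q p - modEnergy h ω ψ₁ φ A q p|
      ≤ (1 + c₀) * (3 + c₀ + c₁) * min h ωm⁻¹ * ‖dOp ω q‖^2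
        + (1/2) * h^2 * ‖dOp ω q‖^2 := by
  have hωmp : (0:ℝ) < ωm := by linarith
  have hA0 : (0:ℝ) ≤ ‖A‖ := norm_nonneg _
  have hb : (1/2) * c₀^2 * ‖A‖ ≤ ωm - 1 := by linarith
  have hm0 : (0:ℝ) ≤ min h ωm⁻¹ := le_min h0.le (by positivity)
  have hmX : (0:ℝ) ≤ min h ωm⁻¹ * ‖dOp ω q‖^2 := by positivity
  -- ‖A‖ * ωm⁻¹ ≤ 2 and c₀^2‖A‖ωm⁻¹ ≤ 2
  have hinv0 : (0:ℝ) ≤ ωm⁻¹ := by positivity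
  have hinv1 : ωm * ωm⁻¹ = 1 := mul_inv_cancel₀ (ne_of_gt hωmp)
  have hAom2 : c₀^2 * ‖A‖ * ωm⁻¹ ≤ 2 := by
    have h2 : c₀^2 * ‖A‖ ≤ 2 * ωm := by nlinarith
    nlinarith [mul_le_mul_of_nonneg_right h2 hinv0]
  have hAom : ‖A‖ * ωm⁻¹ ≤ 2 := by
    have hsq : (0:ℝ) ≤ c₀^2 - 1 := by nlinarith [sq_nonneg (c₀ - 1)]
    have h5 : ‖A‖ ≤ c₀^2 * ‖A‖ := by nlinarith [mul_nonneg hsq hA0]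
    nlinarith [mul_le_mul_of_nonneg_right h5 hinv0]
  -- basic norms
  have nq : ‖q‖ ≤ ωm⁻¹ * ‖dOp ω q‖ := by
    have := norm_le_dOp ω ωm hωmp.le
      (fun i => by rw [abs_of_nonneg (hω0 i)]; exact hωml i) q
    nlinarith [mul_le_mul_of_nonneg_left this hinv0, norm_nonneg q]
  have hc00 : (0:ℝ) ≤ c₀ := by linarith
  have nw : ‖dOp (fun i => φ (h * ω i)) q‖ ≤ c₀ * ‖q‖ :=
    norm_dOp_le_const _ c₀ hc00 (fun i => hφb _) q
  have ncw : ‖dOp (fun i => Real.cos (h * ω i)) (dOp (fun i => φ (h * ω i)) q)‖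
      ≤ c₀ * (ωm⁻¹ * ‖dOp ω q‖) := by
    calc ‖dOp (fun i => Real.cos (h * ω i)) (dOp (fun i => φ (h * ω i)) q)‖
        ≤ 1 * ‖dOp (fun i => φ (h * ω i)) q‖ :=
          norm_dOp_le_const _ 1 zero_le_one (fun i => Real.abs_cos_le_one _) _
      _ = ‖dOp (fun i => φ (h * ω i)) q‖ := one_mul _
      _ ≤ c₀ * ‖q‖ := nw
      _ ≤ c₀ * (ωm⁻¹ * ‖dOp ω q‖) := mul_le_mul_of_nonneg_left nq hc00
  -- difference vectors
  have b1 : ‖q - dOp (fun i => Real.cos (h * ω i)) (dOp (fun i => φ (h * ω i)) q)‖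
      ≤ (3 + c₀ + c₁) * min h ωm⁻¹ * ‖dOp ω q‖ := by
    have repr : q - dOp (fun i => Real.cos (h * ω i)) (dOp (fun i => φ (h * ω i)) q)
        = dOp (fun i => 1 - Real.cos (h * ω i) * φ (h * ω i)) q := by
      rw [dOp_dOp]; ext i; simp [dOp_apply]; push_cast; ring
    rw [repr]
    have hCnn : (0:ℝ) ≤ (3 + c₀ + c₁) * min h ωm⁻¹ := by
      apply mul_nonneg; linarith; exact hm0
    have := norm_dOp_le_of (fun i => 1 - Real.cos (h * ω i) * φ (h * ω i)) ω
      ((3 + c₀ + c₁) * min h ωm⁻¹) hCnn (fun i => by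
        rw [abs_of_nonneg (hω0 i)]
        have := main_pointwise h (ω i) ωm c₀ c₁ (φ (h * ω i)) h0 hωm1 (hωml i)
          (hφb _) (by
            have := hφ1 (h * ω i)
            rwa [abs_of_nonneg (by nlinarith [hωml i] : (0:ℝ) ≤ h * ω i)] at this)
        linarith [this]) q
    linarith [this]
  have b2 : ‖q - dOp (fun i => φ (h * ω i)) q‖
      ≤ (1 + c₀ + c₁) * min h ωm⁻¹ * ‖dOp ω q‖ := by
    have repr : q - dOp (fun i => φ (h * ω i)) q
        = dOp (fun i => 1 - φ (h * ω i)) q := by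
      ext i; simp [dOp_apply]; push_cast; ring
    rw [repr]
    have hCnn : (0:ℝ) ≤ (1 + c₀ + c₁) * min h ωm⁻¹ := by
      apply mul_nonneg; linarith; exact hm0
    have := norm_dOp_le_of (fun i => 1 - φ (h * ω i)) ω
      ((1 + c₀ + c₁) * min h ωm⁻¹) hCnn (fun i => by
        rw [abs_of_nonneg (hω0 i), abs_sub_comm]
        have := phi_pointwise h (ω i) ωm c₀ c₁ (φ (h * ω i)) h0 hωm1 (hωml i)
          (hφb _) (by
            have := hφ1 (h * ω i)
            rwa [abs_of_nonneg (by nlinarith [hωml i] : (0:ℝ) ≤ h * ω i)] at this)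
        linarith [this]) q
    linarith [this]
  have hAq : ‖A q‖ ≤ ‖A‖ * (ωm⁻¹ * ‖dOp ω q‖) :=
    le_trans (A.le_opNorm q) (mul_le_mul_of_nonneg_left nq hA0)
  have hAqw : ‖A (q - dOp (fun i => φ (h * ω i)) q)‖
      ≤ ‖A‖ * ((1 + c₀ + c₁) * min h ωm⁻¹ * ‖dOp ω q‖) :=
    le_trans (A.le_opNorm _) (mul_le_mul_of_nonneg_left b2 hA0)
  set X := ‖dOp ω q‖ with hX
  have hX0 : (0:ℝ) ≤ X := norm_nonneg _
  -- the three bounded pieces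
  have r1 : |(⟪q - dOp (fun i => Real.cos (h * ω i)) (dOp (fun i => φ (h * ω i)) q), A q⟫).re|
      ≤ 2 * (3 + c₀ + c₁) * (min h ωm⁻¹ * X^2) := by
    calc |(⟪q - dOp (fun i => Real.cos (h * ω i)) (dOp (fun i => φ (h * ω i)) q), A q⟫).re|
        ≤ ((3 + c₀ + c₁) * min h ωm⁻¹ * X) * (‖A‖ * (ωm⁻¹ * X)) :=
          re_inner_bound _ _ _ _ b1 hAq
      _ = ((3 + c₀ + c₁) * (min h ωm⁻¹ * X^2)) * (‖A‖ * ωm⁻¹) := by ring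
      _ ≤ ((3 + c₀ + c₁) * (min h ωm⁻¹ * X^2)) * 2 := by
          refine mul_le_mul_of_nonneg_left hAom ?_
          apply mul_nonneg; linarith; exact hmX
      _ = 2 * (3 + c₀ + c₁) * (min h ωm⁻¹ * X^2) := by ring
  have r2 : |(⟪dOp (fun i => Real.cos (h * ω i)) (dOp (fun i => φ (h * ω i)) q),
      A (q - dOp (fun i => φ (h * ω i)) q)⟫).re|
      ≤ 2 * c₀ * (1 + c₀ + c₁) * (min h ωm⁻¹ * X^2) := by
    calc |(⟪dOp (fun i => Real.cos (h * ω i)) (dOp (fun i => φ (h * ω i)) q),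
        A (q - dOp (fun i => φ (h * ω i)) q)⟫).re|
        ≤ (c₀ * (ωm⁻¹ * X)) * (‖A‖ * ((1 + c₀ + c₁) * min h ωm⁻¹ * X)) :=
          re_inner_bound _ _ _ _ ncw hAqw
      _ = (c₀ * (1 + c₀ + c₁) * (min h ωm⁻¹ * X^2)) * (‖A‖ * ωm⁻¹) := by ring
      _ ≤ (c₀ * (1 + c₀ + c₁) * (min h ωm⁻¹ * X^2)) * 2 := by
          refine mul_le_mul_of_nonneg_left hAom ?_
          apply mul_nonneg
          · apply mul_nonneg hc00; linarith
          · exact hmX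
      _ = 2 * c₀ * (1 + c₀ + c₁) * (min h ωm⁻¹ * X^2) := by ring
  have r3 : (1/8) * (h * ‖dOp (fun i => ψ₁ (h * ω i))
        (A (dOp (fun i => φ (h * ω i)) q))‖)^2 ≤ (1/2) * h^2 * X^2 := by
    have npsi : ‖dOp (fun i => ψ₁ (h * ω i)) (A (dOp (fun i => φ (h * ω i)) q))‖
        ≤ 2 * X := by
      refine le_trans (norm_dOp_le_const _ c₀ hc00 (fun i => hψb _) _) ?_
      have step : ‖A (dOp (fun i => φ (h * ω i)) q)‖ ≤ ‖A‖ * (c₀ * (ωm⁻¹ * X)) := by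
        refine le_trans (A.le_opNorm _) (mul_le_mul_of_nonneg_left ?_ hA0)
        exact le_trans nw (mul_le_mul_of_nonneg_left nq hc00)
      calc c₀ * ‖A (dOp (fun i => φ (h * ω i)) q)‖
          ≤ c₀ * (‖A‖ * (c₀ * (ωm⁻¹ * X))) := mul_le_mul_of_nonneg_left step hc00
        _ = (c₀^2 * ‖A‖ * ωm⁻¹) * X := by ring
        _ ≤ 2 * X := mul_le_mul_of_nonneg_right hAom2 hX0
    have hnn : 0 ≤ h * ‖dOp (fun i => ψ₁ (h * ω i)) (A (dOp (fun i => φ (h * ω i)) q))‖ := by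
      positivity
    nlinarith [npsi, mul_le_mul_of_nonneg_left npsi h0.le]
  -- identity
  have id2 : ⟪q, A q⟫ - ⟪dOp (fun i => Real.cos (h * ω i)) (dOp (fun i => φ (h * ω i)) q),
        A (dOp (fun i => φ (h * ω i)) q)⟫
      = ⟪q - dOp (fun i => Real.cos (h * ω i)) (dOp (fun i => φ (h * ω i)) q), A q⟫
        + ⟪dOp (fun i => Real.cos (h * ω i)) (dOp (fun i => φ (h * ω i)) q),
            A (q - dOp (fun i => φ (h * ω i)) q)⟫ := by
    rw [inner_sub_left, map_sub, inner_sub_right]; ring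
  have e0 : energy ω A q p - modEnergy h ω ψ₁ φ A q p
      = (1/2) * ((⟪q - dOp (fun i => Real.cos (h * ω i)) (dOp (fun i => φ (h * ω i)) q), A q⟫).re
          + (⟪dOp (fun i => Real.cos (h * ω i)) (dOp (fun i => φ (h * ω i)) q),
              A (q - dOp (fun i => φ (h * ω i)) q)⟫).re)
        + (1/8) * (h * ‖dOp (fun i => ψ₁ (h * ω i)) (A (dOp (fun i => φ (h * ω i)) q))‖)^2 := by
    simp only [energy, modEnergy]
    have := congrArg Complex.re id2
    simp only [Complex.sub_re, Complex.add_re] at this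
    nlinarith [this]
  rw [e0]
  set R1 := (⟪q - dOp (fun i => Real.cos (h * ω i)) (dOp (fun i => φ (h * ω i)) q), A q⟫).re with hR1
  set R2 := (⟪dOp (fun i => Real.cos (h * ω i)) (dOp (fun i => φ (h * ω i)) q),
      A (q - dOp (fun i => φ (h * ω i)) q)⟫).re with hR2
  set Z := (1/8) * (h * ‖dOp (fun i => ψ₁ (h * ω i)) (A (dOp (fun i => φ (h * ω i)) q))‖)^2 with hZ
  have hZ0 : 0 ≤ Z := by rw [hZ]; positivity
  have habs : |(1/2) * (R1 + R2) + Z| ≤ (1/2) * |R1| + (1/2) * |R2| + Z := by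
    calc |(1/2) * (R1 + R2) + Z| ≤ |(1/2) * (R1 + R2)| + |Z| := abs_add_le _ _
      _ = (1/2) * |R1 + R2| + Z := by
          rw [abs_of_nonneg hZ0, abs_mul]; norm_num
      _ ≤ (1/2) * (|R1| + |R2|) + Z := by
          have := abs_add_le R1 R2; linarith
      _ = (1/2) * |R1| + (1/2) * |R2| + Z := by ring
  refine le_trans habs ?_
  have gap : (3 + c₀ + c₁) * (min h ωm⁻¹ * X^2) + c₀ * (1 + c₀ + c₁) * (min h ωm⁻¹ * X^2)
      ≤ (1 + c₀) * (3 + c₀ + c₁) * min h ωm⁻¹ * X^2 := by nlinarith [hmX]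
  linarith [r1, r2, r3, gap]

end closeness

/-- Theorem 3, unconditional numerical energy conservation: if all frequencies
are nonzero and `ω ≥ ½c₀²‖A‖ + 1`, there is a constant `C` depending only on
`c₀, c₁, ‖A‖, ‖Ωq_0‖, ‖q̇_0‖` with `|H(q_n,q̇_n) − H(q_0,q̇_0)| ≤ C min(h, ω⁻¹) + C h²`. -/
theorem unconditional_energy_conservation :
    ∃ C : ℝ → ℝ → ℝ → ℝ → ℝ → ℝ,
      ∀ {d : ℕ} (h : ℝ), 0 < h → h ≤ 1 →
      ∀ (ω : Fin d → ℝ), (∀ i, 0 ≤ ω i) → (∀ i, ω i ≠ 0) →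
      ∀ (ψ₁ φ : ℝ → ℝ) (c₀ c₁ : ℝ),
        (∀ ξ : ℝ, ψ₁ ξ = sinc ξ * φ ξ) →
        (∀ ξ : ℝ, |ψ₁ ξ| ≤ c₀) → (∀ ξ : ℝ, |φ ξ| ≤ c₀) →
        (∀ ξ : ℝ, |φ ξ - 1| ≤ c₁ * |ξ|) →
      ∀ A : EuclideanSpace ℂ (Fin d) →L[ℂ] EuclideanSpace ℂ (Fin d), IsSelfAdjoint A →
      ∀ ωmin : ℝ, (∃ i, ω i = ωmin) → (∀ i, ωmin ≤ ω i) →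
        (1 / 2) * c₀ ^ 2 * ‖A‖ + 1 ≤ ωmin →
      ∀ q p : ℕ → EuclideanSpace ℂ (Fin d),
        (∀ n : ℕ, q (n + 1) = trigStepQ h ω ψ₁ φ A (q n) (p n)) →
        (∀ n : ℕ, p (n + 1) = trigStepP h ω ψ₁ φ A (q n) (p n)) →
      ∀ n : ℕ,
        |energy ω A (q n) (p n) - energy ω A (q 0) (p 0)|
          ≤ C c₀ c₁ ‖A‖ ‖dOp ω (q 0)‖ ‖p 0‖ * min h ωmin⁻¹
            + C c₀ c₁ ‖A‖ ‖dOp ω (q 0)‖ ‖p 0‖ * h ^ 2 := by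
  refine ⟨fun c0 c1 _ Q P => 2 * (1 + c0) * (3 + c0 + c1) * (8 * Q^2 + 4 * P^2), ?_⟩
  intro d h h0 h1 ω hω0 hωne ψ₁ φ c₀ c₁ hψ hψb hφb hφ1 A hA ωm hex hωml hbig q p hq hp n
  show |energy ω A (q n) (p n) - energy ω A (q 0) (p 0)|
      ≤ 2 * (1 + c₀) * (3 + c₀ + c₁) * (8 * ‖dOp ω (q 0)‖^2 + 4 * ‖p 0‖^2) * min h ωm⁻¹
        + 2 * (1 + c₀) * (3 + c₀ + c₁) * (8 * ‖dOp ω (q 0)‖^2 + 4 * ‖p 0‖^2) * h^2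
  -- structural facts about the filters
  have hφ0 : φ 0 = 1 := by
    have e : |φ 0 - 1| ≤ 0 := by simpa using hφ1 0
    have := abs_eq_zero.mp (le_antisymm e (abs_nonneg _))
    linarith
  have hc0 : 1 ≤ c₀ := by
    have hb := hφb 0
    rw [hφ0] at hb
    simpa using hb
  have hc1 : 0 ≤ c₁ := by
    have e := hφ1 1
    have := abs_nonneg (φ 1 - 1)
    simp only [abs_one, mul_one] at e
    linarith
  have hA0 : (0:ℝ) ≤ ‖A‖ := norm_nonneg _
  have hωm1 : 1 ≤ ωm := by nlinarith [mul_nonneg (sq_nonneg c₀) hA0]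
  have hm0 : (0:ℝ) ≤ min h ωm⁻¹ := le_min h0.le (by positivity)
  -- exact conservation of the modified energy
  have hcons : ∀ k, modEnergy h ω ψ₁ φ A (q k) (p k) = modEnergy h ω ψ₁ φ A (q 0) (p 0) := by
    intro k
    induction k with
    | zero => rfl
    | succ k ih =>
        rw [hq k, hp k]
        exact (modEnergy_step h ω ψ₁ φ hψ A hA (q k) (p k)).trans ih
  -- uniform bound on ‖Ω q_k‖²
  have hXR : ∀ k, ‖dOp ω (q k)‖^2 ≤ 8 * ‖dOp ω (q 0)‖^2 + 4 * ‖p 0‖^2 := by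
    intro k
    have c0b := modEnergy_close_base h h0 h1 ω hω0 ψ₁ φ c₀ hψ hφb A ωm hωm1 hωml hbig
      (q 0) (p 0)
    have ckb := modEnergy_close_base h h0 h1 ω hω0 ψ₁ φ c₀ hψ hφb A ωm hωm1 hωml hbig
      (q k) (p k)
    rw [abs_le] at c0b ckb
    have := hcons k
    nlinarith [sq_nonneg ‖p k‖, sq_nonneg ‖p 0‖, sq_nonneg ‖dOp ω (q 0)‖]
  -- closeness of the true energy to the modified energy, at step k and 0
  have tn := energy_modEnergy_close h h0 h1 ω hω0 ψ₁ φ c₀ c₁ hψ hψb hφb hφ1 hc0 hc1 A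
    ωm hωm1 hωml hbig (q n) (p n)
  have t0 := energy_modEnergy_close h h0 h1 ω hω0 ψ₁ φ c₀ c₁ hψ hψb hφb hφ1 hc0 hc1 A
    ωm hωm1 hωml hbig (q 0) (p 0)
  have tri : |energy ω A (q n) (p n) - energy ω A (q 0) (p 0)|
      ≤ |energy ω A (q n) (p n) - modEnergy h ω ψ₁ φ A (q n) (p n)|
        + |energy ω A (q 0) (p 0) - modEnergy h ω ψ₁ φ A (q 0) (p 0)| := by
    have e1 := abs_sub_le (energy ω A (q n) (p n)) (modEnergy h ω ψ₁ φ A (q n) (p n))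
      (energy ω A (q 0) (p 0))
    have e2 : |modEnergy h ω ψ₁ φ A (q n) (p n) - energy ω A (q 0) (p 0)|
        = |energy ω A (q 0) (p 0) - modEnergy h ω ψ₁ φ A (q 0) (p 0)| := by
      rw [hcons n, abs_sub_comm]
    linarith [e1, e2.le, e2.ge]
  -- final arithmetic
  have hD0 : (0:ℝ) ≤ (1 + c₀) * (3 + c₀ + c₁) := by nlinarith
  have hD8 : (8:ℝ) ≤ (1 + c₀) * (3 + c₀ + c₁) := by nlinarith
  have hR0 : (0:ℝ) ≤ 8 * ‖dOp ω (q 0)‖^2 + 4 * ‖p 0‖^2 := by positivity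
  have hXnR := hXR n
  have hX0R : ‖dOp ω (q 0)‖^2 ≤ 8 * ‖dOp ω (q 0)‖^2 + 4 * ‖p 0‖^2 := by
    nlinarith [sq_nonneg ‖dOp ω (q 0)‖, sq_nonneg ‖p 0‖]
  have u1 : (1 + c₀) * (3 + c₀ + c₁) * min h ωm⁻¹ * ‖dOp ω (q n)‖^2
      ≤ (1 + c₀) * (3 + c₀ + c₁) * min h ωm⁻¹ * (8 * ‖dOp ω (q 0)‖^2 + 4 * ‖p 0‖^2) :=
    mul_le_mul_of_nonneg_left hXnR (by positivity)
  have u2 : (1 + c₀) * (3 + c₀ + c₁) * min h ωm⁻¹ * ‖dOp ω (q 0)‖^2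
      ≤ (1 + c₀) * (3 + c₀ + c₁) * min h ωm⁻¹ * (8 * ‖dOp ω (q 0)‖^2 + 4 * ‖p 0‖^2) :=
    mul_le_mul_of_nonneg_left hX0R (by positivity)
  have u3 : (1/2) * h^2 * ‖dOp ω (q n)‖^2
      ≤ (1/2) * h^2 * (8 * ‖dOp ω (q 0)‖^2 + 4 * ‖p 0‖^2) :=
    mul_le_mul_of_nonneg_left hXnR (by positivity)
  have u4 : (1/2) * h^2 * ‖dOp ω (q 0)‖^2
      ≤ (1/2) * h^2 * (8 * ‖dOp ω (q 0)‖^2 + 4 * ‖p 0‖^2) :=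
    mul_le_mul_of_nonneg_left hX0R (by positivity)
  have u5 : h^2 * (8 * ‖dOp ω (q 0)‖^2 + 4 * ‖p 0‖^2)
      ≤ 2 * (1 + c₀) * (3 + c₀ + c₁) * (8 * ‖dOp ω (q 0)‖^2 + 4 * ‖p 0‖^2) * h^2 := by
    nlinarith [mul_nonneg (mul_nonneg (by linarith : (0:ℝ) ≤ 2 * ((1 + c₀) * (3 + c₀ + c₁)) - 1)
      hR0) (sq_nonneg h)]
  have u6 : 2 * ((1 + c₀) * (3 + c₀ + c₁) * min h ωm⁻¹ * (8 * ‖dOp ω (q 0)‖^2 + 4 * ‖p 0‖^2))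
      = 2 * (1 + c₀) * (3 + c₀ + c₁) * (8 * ‖dOp ω (q 0)‖^2 + 4 * ‖p 0‖^2) * min h ωm⁻¹ := by
    ring
  linarith [tn, t0, tri, u1, u2, u3, u4, u5, u6.le, u6.ge]
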